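/- Let A ∈ I and let 𝔞 be an ideal of 𝒪 with δ₁(A) | 𝔞 | δ₂(A), let a ∈ 𝔞 be nonzero with a𝒪 + δ₂(A) = 𝔞, set 𝔮 = 𝔞⁻¹·a𝒪 and 𝔟 = 𝔞⁻¹·δ₂(A), and let T be a transversal of 𝔮/𝔮𝔟. Then for every ideal 𝔠 of 𝒪 satisfying 𝔠 | 𝔞 | δ₂(A)·𝔠⁻¹, one has |{c ∈ T : c − 1 ∈ 𝔠}| = N(𝔟)·N(𝔠)⁻¹. -/

import Mathlib

open Matrix

/-- The first determinantal divisor `δ₁(A)`. -/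
def delta1 {O : Type*} [CommRing O] (A : Matrix (Fin 2) (Fin 2) O) : Ideal O :=
  Ideal.span {A 0 0, A 0 1, A 1 0, A 1 1}

/-- The second determinantal divisor `δ₂(A) = (det A)𝒪`. -/
def delta2 {O : Type*} [CommRing O] (A : Matrix (Fin 2) (Fin 2) O) : Ideal O :=
  Ideal.span {A.det}

/-- `T` is a transversal of the quotient of ideals `I/J`: it consists of elements of `I` and
contains exactly one representative of each residue class of `I` modulo `J`. -/
def IsTransversal {O : Type*} [CommRing O] (I J : Ideal O) (T : Set O) : Prop :=
  T ⊆ (I : Set O) ∧ ∀ x ∈ I, ∃! t, t ∈ T ∧ x - t ∈ J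

set_option maxHeartbeats 1000000 in
theorem stmt7 {O : Type*} [CommRing O] [IsDomain O] [IsDedekindDomain O]
    -- `𝒪` is norm-finite:
    (hnf : ∀ x : O, x ≠ 0 → Finite (O ⧸ Ideal.span {x}))
    (A : Matrix (Fin 2) (Fin 2) O) (hA : A.det ≠ 0)
    -- `δ₁(A) | 𝔞 | δ₂(A)` (divisibility of ideals is reverse inclusion):
    (𝔞 : Ideal O) (h1 : 𝔞 ≤ delta1 A) (h2 : delta2 A ≤ 𝔞)
    -- a nonzero `a ∈ 𝔞` with `a𝒪 + δ₂(A) = 𝔞`: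
    (a : O) (ha : a ≠ 0) (haa : a ∈ 𝔞) (hagen : Ideal.span {a} + delta2 A = 𝔞)
    -- `𝔮 = 𝔞⁻¹·a𝒪` and `𝔟 = 𝔞⁻¹·δ₂(A)`, characterised by `𝔮𝔞 = a𝒪` and `𝔟𝔞 = δ₂(A)`:
    (𝔮 𝔟 : Ideal O) (h𝔮 : 𝔮 * 𝔞 = Ideal.span {a}) (h𝔟 : 𝔟 * 𝔞 = delta2 A)
    -- `T` is a transversal of `𝔮/𝔮𝔟`:
    (T : Set O) (hT : IsTransversal 𝔮 (𝔮 * 𝔟) T)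
    -- an ideal `𝔠` with `𝔠 | 𝔞 | δ₂(A)·𝔠⁻¹`:
    (𝔠 : Ideal O) (hc1 : 𝔞 ≤ 𝔠) (hc2 : delta2 A ≤ 𝔞 * 𝔠) :
    (Nat.card {c : O // c ∈ T ∧ c - 1 ∈ 𝔠} : ℚ) =
      (Nat.card (O ⧸ 𝔟) : ℚ) * (Nat.card (O ⧸ 𝔠) : ℚ)⁻¹ := by
  -- basic nonvanishing
  have h𝔞0 : 𝔞 ≠ 0 := fun h => ha (by simpa [h, Ideal.zero_eq_bot] using haa)
  have hd2 : delta2 A ≠ 0 := by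
    simpa [delta2, Ideal.zero_eq_bot, Ideal.span_singleton_eq_bot] using hA
  -- 𝔮 ⊔ 𝔟 = ⊤
  have hqb : 𝔮 ⊔ 𝔟 = ⊤ := by
    have : (𝔮 ⊔ 𝔟) * 𝔞 = ⊤ * 𝔞 := by
      rw [Ideal.sup_mul, h𝔮, h𝔟, Ideal.top_mul, ← hagen, Submodule.add_eq_sup]
    exact mul_right_cancel₀ h𝔞0 this
  -- 𝔟 ≤ 𝔠
  have hbc : 𝔟 ≤ 𝔠 := by
    have hdvd : 𝔠 * 𝔞 ∣ 𝔟 * 𝔞 := by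
      rw [Ideal.dvd_iff_le, h𝔟, mul_comm]
      exact hc2
    exact Ideal.dvd_iff_le.mp ((mul_dvd_mul_iff_right h𝔞0).mp hdvd)
  -- 𝔮 ⊓ 𝔟 ≤ 𝔮 * 𝔟
  have hcop : IsCoprime 𝔮 𝔟 := Ideal.isCoprime_iff_sup_eq.mpr hqb
  have hcap : ∀ x : O, x ∈ 𝔮 → x ∈ 𝔟 → x ∈ 𝔮 * 𝔟 := by
    intro x hx1 hx2
    have hd : 𝔮 * 𝔟 ∣ Ideal.span {x} :=
      hcop.mul_dvd (Ideal.dvd_iff_le.mpr ((Ideal.span_singleton_le_iff_mem _).mpr hx1))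
        (Ideal.dvd_iff_le.mpr ((Ideal.span_singleton_le_iff_mem _).mpr hx2))
    exact Ideal.dvd_iff_le.mp hd (Ideal.mem_span_singleton_self x)
  -- pick q ∈ 𝔮 with 1 - q ∈ 𝔠
  have hqc : 𝔮 ⊔ 𝔠 = ⊤ := top_unique (hqb ▸ sup_le_sup_left hbc 𝔮)
  obtain ⟨q, hq𝔮, z0, hz0, hqz⟩ := Submodule.mem_sup.mp
    (by rw [hqc]; exact Submodule.mem_top : (1 : O) ∈ 𝔮 ⊔ 𝔠)
  have h1q : 1 - q ∈ 𝔠 := by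
    have : 1 - q = z0 := by linear_combination -hqz
    rwa [this]
  -- finiteness
  have finb : Finite (O ⧸ 𝔟) := by
    have hdet : A.det ∈ 𝔟 := by
      have : delta2 A ≤ 𝔟 := h𝔟 ▸ Ideal.mul_le_left
      exact this (Ideal.mem_span_singleton_self _)
    have hle : Ideal.span {A.det} ≤ 𝔟 := (Ideal.span_singleton_le_iff_mem _).mpr hdet
    have := hnf A.det hA
    exact Finite.of_surjective (Ideal.Quotient.factor hle)
      (fun y => by
        obtain ⟨z, rfl⟩ := Ideal.Quotient.mk_surjective y
        exact ⟨Ideal.Quotient.mk _ z, rfl⟩)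
  have finc : Finite (O ⧸ 𝔠) := by
    have hle : Ideal.span {a} ≤ 𝔠 := (Ideal.span_singleton_le_iff_mem _).mpr (hc1 haa)
    have := hnf a ha
    exact Finite.of_surjective (Ideal.Quotient.factor hle)
      (fun y => by
        obtain ⟨z, rfl⟩ := Ideal.Quotient.mk_surjective y
        exact ⟨Ideal.Quotient.mk _ z, rfl⟩)
  -- the linear map 𝔠 → O⧸𝔟 and its kernel p
  set f : 𝔠 →ₗ[O] O ⧸ 𝔟 := 𝔟.mkQ ∘ₗ 𝔠.subtype with hf
  set p : Submodule O 𝔠 := LinearMap.ker f with hp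
  have hmemp : ∀ x : 𝔠, x ∈ p ↔ (x : O) ∈ 𝔟 := by
    intro x
    simp [hp, hf, LinearMap.mem_ker, Ideal.Quotient.eq_zero_iff_mem]
  have hr : LinearMap.range f = Submodule.map 𝔟.mkQ 𝔠 := by
    rw [hf, LinearMap.range_comp, Submodule.range_subtype]
  have finq : Finite (𝔠 ⧸ p) := Finite.of_equiv _ f.quotKerEquivRange.symm.toEquiv
  -- tower formula: N(𝔟) = card(𝔠⧸p) * N(𝔠)
  have key2 : Nat.card (O ⧸ 𝔟) = Nat.card (𝔠 ⧸ p) * Nat.card (O ⧸ 𝔠) := by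
    have e1 : Nat.card ↥(Submodule.map 𝔟.mkQ 𝔠) = Nat.card (𝔠 ⧸ p) := by
      rw [← hr]
      exact (Nat.card_congr f.quotKerEquivRange.toEquiv).symm
    have e2 : Nat.card ((O ⧸ 𝔟) ⧸ Submodule.map 𝔟.mkQ 𝔠) = Nat.card (O ⧸ 𝔠) :=
      Nat.card_congr (Submodule.quotientQuotientEquivQuotient 𝔟 𝔠 hbc).toEquiv
    rw [← e1, ← e2]
    exact Submodule.card_eq_card_quotient_mul_card (Submodule.map 𝔟.mkQ 𝔠)
  -- the bijection
  have key1 : Nat.card {c : O // c ∈ T ∧ c - 1 ∈ 𝔠} = Nat.card (𝔠 ⧸ p) := by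
    have hsub : ∀ t : O, t - 1 ∈ 𝔠 → t - q ∈ 𝔠 := by
      intro t ht
      have : t - q = (t - 1) + (1 - q) := by ring
      rw [this]; exact add_mem ht h1q
    refine Nat.card_congr (Equiv.ofBijective
      (fun c => Submodule.Quotient.mk (⟨c.1 - q, hsub c.1 c.2.2⟩ : 𝔠)) ⟨?_, ?_⟩)
    · rintro ⟨t, htT, ht1⟩ ⟨t', htT', ht1'⟩ h
      have hd : t - t' ∈ 𝔟 := by
        have := (Submodule.Quotient.eq p).mp h
        have := (hmemp _).mp this
        simpa using this
      have hq' : t - t' ∈ 𝔮 * 𝔟 := hcap _ (sub_mem (hT.1 htT) (hT.1 htT')) hd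
      obtain ⟨u, _, huniq⟩ := hT.2 t (hT.1 htT)
      have h1 : t = u := huniq t ⟨htT, by simp⟩
      have h2 : t' = u := huniq t' ⟨htT', hq'⟩
      exact Subtype.ext (h1.trans h2.symm)
    · intro w
      obtain ⟨z, rfl⟩ := Submodule.Quotient.mk_surjective p w
      obtain ⟨u, hu, v, hv, huv⟩ := Submodule.mem_sup.mp
        (by rw [hqb]; exact Submodule.mem_top : q + (z : O) ∈ 𝔮 ⊔ 𝔟)
      obtain ⟨t, ⟨htT, htu⟩, _⟩ := hT.2 u hu
      have hbmem : t - q - (z : O) ∈ 𝔟 := by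
        have heq : t - q - (z : O) = -(u - t) - v := by linear_combination huv
        rw [heq]
        exact sub_mem (neg_mem (Ideal.mul_le_right htu)) hv
      have ht1 : t - 1 ∈ 𝔠 := by
        have heq : t - 1 = (t - q - (z : O)) + (z : O) - (1 - q) := by ring
        rw [heq]
        exact sub_mem (add_mem (hbc hbmem) z.2) h1q
      refine ⟨⟨t, htT, ht1⟩, ?_⟩
      rw [Submodule.Quotient.eq]
      rw [hmemp]
      simpa using hbmem
  -- conclude
  have ncpos : 0 < Nat.card (O ⧸ 𝔠) := Nat.card_pos
  rw [key1, key2]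
  have : ((Nat.card (O ⧸ 𝔠) : ℚ)) ≠ 0 := by exact_mod_cast ncpos.ne'
  push_cast
  field_simp
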